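/- Assume {W_ε} is L-admissible and β ∈ Γ. For each sufficiently small ε > 0 let {f_ε^{(1)},…,f_ε^{(N)}} be a basis of ℂ^N of unit-norm eigenvectors of P_{ε,β}, with P_{ε,β} f_ε^{(ℓ)} = λ_ε^{(ℓ)} f_ε^{(ℓ)}, labelled so that λ_ε^{(ℓ)} → e^{−2πikβ_{s_ℓ}} as ε → 0, and let {f^{(1)},…,f^{(N)}} be an orthonormal eigenbasis of P̂_{k,β,L} with f^{(ℓ)} ∈ V_{s_ℓ} and min_{θ∈[0,2π)} ‖f_ε^{(ℓ)} − e^{iθ} f^{(ℓ)}‖ → 0. Denote by λ̂^{(ℓ)} the eigenvalue of P̂_{k,β,L} associated with f^{(ℓ)}. Then for every ℓ, (λ_ε^{(ℓ)} − e^{−2πikβ_{s_ℓ}})/ε → λ̂^{(ℓ)} as ε → 0; that is, λ_ε^{(ℓ)} = e^{−2πikβ_{s_ℓ}} + ε λ̂^{(ℓ)} + o(ε). -/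

import Mathlib

noncomputable section
open Complex Filter Topology MeasureTheory

/-- `eC k b = exp(-2πi k b)`. -/
def eC (k : ℤ) (b : ℝ) : ℂ := Complex.exp (-2 * (Real.pi : ℂ) * Complex.I * (k : ℂ) * (b : ℂ))

variable {N S : ℕ}

/-- Hermitian inner product `⟨v,w⟩ = ∑_j v j * conj (w j)` on `ℂ^N`. -/
def inn (v w : Fin N → ℂ) : ℂ := ∑ j, v j * (starRingEnd ℂ) (w j)

/-- Euclidean norm on `ℂ^N`. -/
def nrm (v : Fin N → ℂ) : ℝ := Real.sqrt (∑ j, Complex.normSq (v j))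

/-- `W_ε = I + ε Ẇ` (complexified). -/
def Weps (Wd : Matrix (Fin N) (Fin N) ℝ) (ε : ℝ) : Matrix (Fin N) (Fin N) ℂ :=
  1 + (ε : ℂ) • (Wd.map Complex.ofReal)

/-- The diagonal matrix `D_{k,α}` with entries `exp(-2πik α_j)`. -/
def DmatA (k : ℤ) (α : Fin N → ℝ) : Matrix (Fin N) (Fin N) ℂ :=
  Matrix.diagonal fun j => eC k (α j)

/-- Partial sums of the band-width vector: `Nsum L s = L 0 + ⋯ + L (s-1)`. -/
def Nsum (L : Fin S → ℕ) (s : ℕ) : ℕ := ∑ i : Fin S, if (i : ℕ) < s then L i else 0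

/-- `j` belongs to the `s`-th band `B_s` (with `j` 0-indexed). -/
def inBand (L : Fin S → ℕ) (s : Fin S) (j : Fin N) : Prop :=
  Nsum L (s : ℕ) ≤ (j : ℕ) ∧ (j : ℕ) < Nsum L ((s : ℕ) + 1)

/-- `D_{k,β,L}`: block-diagonal with `s`-th block `exp(-2πik β_s)·Id`, expressed
via the band-index function `bI` (where `bI j` is the band of `j`). -/
def Dmat (k : ℤ) (β : Fin S → ℝ) (bI : Fin N → Fin S) : Matrix (Fin N) (Fin N) ℂ :=
  Matrix.diagonal fun j => eC k (β (bI j))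

/-- `P_{ε,β} = D_{k,β,L} W_ε`. -/
def Pmat (k : ℤ) (β : Fin S → ℝ) (bI : Fin N → Fin S) (Wd : Matrix (Fin N) (Fin N) ℝ)
    (ε : ℝ) : Matrix (Fin N) (Fin N) ℂ := Dmat k β bI * Weps Wd ε

/-- `Ŵ_L`: the block-diagonal part of `Ẇ` (blocks `Ŵ_1, …, Ŵ_S`). -/
def WhatL (Wd : Matrix (Fin N) (Fin N) ℝ) (bI : Fin N → Fin S) : Matrix (Fin N) (Fin N) ℝ :=
  Matrix.of fun j l => if bI j = bI l then Wd j l else 0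

/-- `P̂_{k,β,L} = D_{k,β,L} Ŵ_L`. -/
def Phat (k : ℤ) (β : Fin S → ℝ) (bI : Fin N → Fin S) (Wd : Matrix (Fin N) (Fin N) ℝ) :
    Matrix (Fin N) (Fin N) ℂ := Dmat k β bI * (WhatL Wd bI).map Complex.ofReal

/-- `L`-admissibility of the family `W_ε = I + εẆ`. -/
def LAdmissible (L : Fin S → ℕ) (Wd : Matrix (Fin N) (Fin N) ℝ) (bI : Fin N → Fin S) : Prop :=
  Wd.IsSymm ∧ (∀ i j, i ≠ j → 0 ≤ Wd i j) ∧ (∀ i, ∑ j, Wd i j = 0) ∧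
  (∃ μ : Fin N → ℝ, Function.Injective μ ∧ ∃ v : Fin N → Fin N → ℝ,
    (∀ i, v i ≠ 0) ∧ ∀ i, Wd.mulVec (v i) = μ i • v i) ∧
  (∀ s : Fin S, ∃ μ : Fin (L s) → ℝ, Function.Injective μ ∧
    ∃ v : Fin (L s) → Fin N → ℝ, (∀ i, v i ≠ 0) ∧ (∀ i j, bI j ≠ s → v i j = 0) ∧
      ∀ i, (WhatL Wd bI).mulVec (v i) = μ i • v i)

/-- `β ∈ Γ`: for every nonzero integer `k'`, the exponentials `exp(-2πik' β_s)`
of distinct bands never coincide. -/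
def Gamma (β : Fin S → ℝ) : Prop :=
  ∀ k' : ℤ, k' ≠ 0 → ∀ s1 s2 : Fin S, s1 ≠ s2 → eC k' (β s1) ≠ eC k' (β s2)

/-- Orthogonal projection `π_s` of `ℂ^N` onto `V_s`. -/
def projBand (bI : Fin N → Fin S) (s : Fin S) (v : Fin N → ℂ) : Fin N → ℂ :=
  fun j => if bI j = s then v j else 0

/-- `min_{θ∈[0,2π)} ‖v − e^{iθ} w‖`. -/
def phaseDist (v w : Fin N → ℂ) : ℝ :=
  sInf ((fun θ : ℝ => nrm (v - Complex.exp (θ * Complex.I) • w)) '' Set.Ico 0 (2 * Real.pi))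

/-- `dist_{ℂP}(v,w) = min_{θ∈[0,2π)} ‖v/‖v‖ − e^{iθ}·w/‖w‖‖`. -/
def cpDist (v w : Fin N → ℂ) : ℝ :=
  sInf ((fun θ : ℝ =>
    nrm ((nrm v)⁻¹ • v - Complex.exp (θ * Complex.I) • ((nrm w)⁻¹ • w))) '' Set.Ico 0 (2 * Real.pi))

/-! ### Auxiliary lemmas -/

lemma inn_eq_inner' (v w : Fin N → ℂ) :
    inn v w = @inner ℂ (EuclideanSpace ℂ (Fin N)) _
      ((WithLp.equiv 2 _).symm w) ((WithLp.equiv 2 _).symm v) := by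
  simp [inn, PiLp.inner_apply, mul_comm]

lemma nrm_eq_norm' (v : Fin N → ℂ) :
    nrm v = ‖((WithLp.equiv 2 (Fin N → ℂ)).symm v : EuclideanSpace ℂ (Fin N))‖ := by
  rw [EuclideanSpace.norm_eq]
  unfold nrm
  congr 1
  apply Finset.sum_congr rfl
  intro j _
  rw [Complex.normSq_eq_norm_sq]
  rfl

lemma norm_inn_le (v w : Fin N → ℂ) : ‖inn v w‖ ≤ nrm v * nrm w := by
  rw [inn_eq_inner', nrm_eq_norm', nrm_eq_norm', mul_comm]
  exact norm_inner_le_norm _ _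

lemma nrm_nonneg' (v : Fin N → ℂ) : 0 ≤ nrm v := Real.sqrt_nonneg _

lemma inn_add_left' (u v w : Fin N → ℂ) : inn (u + v) w = inn u w + inn v w := by
  simp [inn, add_mul, Finset.sum_add_distrib]

lemma inn_smul_left' (c : ℂ) (v w : Fin N → ℂ) : inn (c • v) w = c * inn v w := by
  simp [inn, Finset.mul_sum, mul_assoc]

lemma Nsum_mono' (L : Fin S → ℕ) {a b : ℕ} (h : a ≤ b) : Nsum L a ≤ Nsum L b := by
  apply Finset.sum_le_sum
  intro i _
  split_ifs with h1 h2 <;> omega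

lemma band_unique' (L : Fin S → ℕ) {s s' : Fin S} {j : Fin N}
    (h : inBand L s j) (h' : inBand L s' j) : s = s' := by
  obtain ⟨h1, h2⟩ := h; obtain ⟨h3, h4⟩ := h'
  by_contra hne
  have hne' : (s : ℕ) ≠ (s' : ℕ) := fun he => hne (Fin.ext he)
  rcases lt_or_gt_of_ne hne' with hl | hl
  · have := Nsum_mono' L (show (s : ℕ) + 1 ≤ (s' : ℕ) from hl)
    omega
  · have := Nsum_mono' L (show (s' : ℕ) + 1 ≤ (s : ℕ) from hl)
    omega

/-- first-order expansion of the eigenvalues: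
`(λ_ε^{(ℓ)} − exp(−2πikβ_{s_ℓ}))/ε → λ̂^{(ℓ)}`. -/
theorem stmt8 (N S : ℕ) (hN : 1 ≤ N) (hS1 : 1 ≤ S) (hSN : S ≤ N) (k : ℤ)
    (β : Fin S → ℝ) (hβ : Function.Injective β)
    (L : Fin S → ℕ) (hL : ∀ s, 0 < L s) (hsum : ∑ s, L s = N)
    (bI : Fin N → Fin S) (hbI : ∀ j, inBand L (bI j) j)
    (Wd : Matrix (Fin N) (Fin N) ℝ) (hadm : LAdmissible L Wd bI) (hΓ : Gamma β)
    (ε₀ : ℝ) (hε₀ : 0 < ε₀)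
    (f : ℝ → Fin N → Fin N → ℂ) (lam : ℝ → Fin N → ℂ)
    (hbasis : ∀ ε ∈ Set.Ioo (0:ℝ) ε₀, LinearIndependent ℂ (f ε))
    (hspan : ∀ ε ∈ Set.Ioo (0:ℝ) ε₀, Submodule.span ℂ (Set.range (f ε)) = ⊤)
    (hunit : ∀ ε ∈ Set.Ioo (0:ℝ) ε₀, ∀ ℓ, nrm (f ε ℓ) = 1)
    (heig : ∀ ε ∈ Set.Ioo (0:ℝ) ε₀, ∀ ℓ,
      (Pmat k β bI Wd ε).mulVec (f ε ℓ) = lam ε ℓ • f ε ℓ)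
    (hlabel : ∀ ℓ, Tendsto (fun ε => lam ε ℓ) (𝓝[>] (0:ℝ)) (𝓝 (eC k (β (bI ℓ)))))
    (F : Fin N → Fin N → ℂ) (lamhat : Fin N → ℂ)
    (horth : ∀ i j, inn (F i) (F j) = if i = j then 1 else 0)
    (heigF : ∀ ℓ, (Phat k β bI Wd).mulVec (F ℓ) = lamhat ℓ • F ℓ)
    (hsupp : ∀ ℓ j, ¬ inBand L (bI ℓ) j → F ℓ j = 0)
    (hconv : ∀ ℓ, Tendsto (fun ε => phaseDist (f ε ℓ) (F ℓ)) (𝓝[>] (0:ℝ)) (𝓝 0)) :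
    ∀ ℓ, Tendsto (fun ε : ℝ => (lam ε ℓ - eC k (β (bI ℓ))) / (ε : ℂ))
      (𝓝[>] (0:ℝ)) (𝓝 (lamhat ℓ)) := by
  intro ℓ
  set c : ℂ := eC k (β (bI ℓ)) with hc
  set A : Matrix (Fin N) (Fin N) ℂ := Dmat k β bI * Wd.map Complex.ofReal with hA
  -- support of F ℓ lies in the band of ℓ
  have hsup : ∀ j, F ℓ j ≠ 0 → bI j = bI ℓ := by
    intro j hj
    have hib : inBand L (bI ℓ) j := by
      by_contra h
      exact hj (hsupp ℓ j h)
    exact band_unique' L (hbI j) hib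
  -- pairing with Dmat against F ℓ acts as multiplication by c
  have hDin : ∀ v : Fin N → ℂ, inn ((Dmat k β bI).mulVec v) (F ℓ) = c * inn v (F ℓ) := by
    intro v
    unfold inn
    rw [Finset.mul_sum]
    apply Finset.sum_congr rfl
    intro j _
    simp only [Dmat, Matrix.mulVec_diagonal]
    by_cases hj : F ℓ j = 0
    · simp [hj]
    · rw [hsup j hj, ← hc]; ring
  -- the fixed vector G with inn (A *ᵥ v) (F ℓ) = inn v G
  set G : Fin N → ℂ := fun l => (starRingEnd ℂ) (∑ j, A j l * (starRingEnd ℂ) (F ℓ j)) with hG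
  have hinnA : ∀ v : Fin N → ℂ, inn (A.mulVec v) (F ℓ) = inn v G := by
    intro v
    unfold inn
    simp only [Matrix.mulVec, dotProduct, Finset.sum_mul]
    rw [Finset.sum_comm]
    apply Finset.sum_congr rfl
    intro l _
    have hGl : (starRingEnd ℂ) (G l) = ∑ j, A j l * (starRingEnd ℂ) (F ℓ j) := by
      rw [hG]; exact Complex.conj_conj _
    rw [hGl, Finset.mul_sum]
    apply Finset.sum_congr rfl
    intro j _
    ring
  -- inn (F ℓ) G = lamhat ℓ
  have hFG : inn (F ℓ) G = lamhat ℓ := by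
    rw [← hinnA (F ℓ)]
    have h1 : inn (A.mulVec (F ℓ)) (F ℓ) = inn ((Phat k β bI Wd).mulVec (F ℓ)) (F ℓ) := by
      unfold inn
      apply Finset.sum_congr rfl
      intro j _
      by_cases hj : F ℓ j = 0
      · simp [hj]
      · congr 1
        simp only [hA, Phat, Matrix.mulVec, dotProduct]
        apply Finset.sum_congr rfl
        intro l _
        by_cases hl : F ℓ l = 0
        · simp [hl]
        · have hjl : bI j = bI l := (hsup j hj).trans (hsup l hl).symm
          simp only [Dmat, WhatL, Matrix.diagonal_mul, Matrix.map_apply, Matrix.of_apply,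
            if_pos hjl]
    rw [h1, heigF ℓ, inn_smul_left', horth ℓ ℓ]
    simp
  -- norm of F ℓ is 1
  have hnF : nrm (F ℓ) = 1 := by
    have h11 := horth ℓ ℓ
    rw [if_pos rfl] at h11
    unfold inn at h11
    simp only [Complex.mul_conj] at h11
    have h12 : ((∑ j, Complex.normSq (F ℓ j) : ℝ) : ℂ) = 1 := by
      push_cast
      exact h11
    have h13 : (∑ j, Complex.normSq (F ℓ j)) = 1 := by exact_mod_cast h12
    unfold nrm
    rw [h13, Real.sqrt_one]
  -- the key identity
  have hID : ∀ ε ∈ Set.Ioo (0:ℝ) ε₀,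
      (lam ε ℓ - c) * inn (f ε ℓ) (F ℓ) = (ε : ℂ) * inn (f ε ℓ) G := by
    intro ε hε
    have h1 := heig ε hε ℓ
    have h2 : inn ((Pmat k β bI Wd ε).mulVec (f ε ℓ)) (F ℓ)
        = lam ε ℓ * inn (f ε ℓ) (F ℓ) := by
      rw [h1, inn_smul_left']
    have h3 : (Pmat k β bI Wd ε).mulVec (f ε ℓ)
        = (Dmat k β bI).mulVec (f ε ℓ) + (ε : ℂ) • (A.mulVec (f ε ℓ)) := by
      unfold Pmat Weps
      rw [← Matrix.mulVec_mulVec, Matrix.add_mulVec, Matrix.one_mulVec,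
        Matrix.smul_mulVec, Matrix.mulVec_add, Matrix.mulVec_smul,
        Matrix.mulVec_mulVec, ← hA]
    rw [h3, inn_add_left', inn_smul_left', hDin, hinnA] at h2
    linear_combination -h2
  set K : ℝ := nrm G + ‖lamhat ℓ‖ with hKdef
  have hK : 0 ≤ K := add_nonneg (nrm_nonneg' G) (norm_nonneg _)
  -- the quantitative estimate
  have hEst : ∀ ε ∈ Set.Ioo (0:ℝ) ε₀, ∀ θ : ℝ,
      nrm (f ε ℓ - Complex.exp (θ * Complex.I) • F ℓ) < 1/2 →
      ‖(lam ε ℓ - c) / (ε : ℂ) - lamhat ℓ‖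
        ≤ 2 * K * nrm (f ε ℓ - Complex.exp (θ * Complex.I) • F ℓ) := by
    intro ε hε θ hθ
    set e : ℂ := Complex.exp (θ * Complex.I) with he
    set u : Fin N → ℂ := f ε ℓ - e • F ℓ with hu
    set d : ℝ := nrm u with hd
    have hd0 : 0 ≤ d := nrm_nonneg' u
    have hfeq : f ε ℓ = u + e • F ℓ := by rw [hu]; abel
    have habse : ‖e‖ = 1 := by
      rw [he]
      exact Complex.norm_exp_ofReal_mul_I θ
    have hfF : inn (f ε ℓ) (F ℓ) = inn u (F ℓ) + e := by
      rw [hfeq, inn_add_left', inn_smul_left', horth ℓ ℓ]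
      simp
    have hfG : inn (f ε ℓ) G = inn u G + e * lamhat ℓ := by
      rw [hfeq, inn_add_left', inn_smul_left', hFG]
    have hdF : ‖inn u (F ℓ)‖ ≤ d := by
      have := norm_inn_le u (F ℓ)
      rw [hnF, mul_one] at this
      exact this
    have hdG : ‖inn u G‖ ≤ d * nrm G := norm_inn_le u G
    have hlow : 1 - d ≤ ‖inn (f ε ℓ) (F ℓ)‖ := by
      rw [hfF]
      have h1 : ‖e‖ ≤ ‖inn u (F ℓ) + e‖ + ‖inn u (F ℓ)‖ := by
        have h0 : e = (inn u (F ℓ) + e) - inn u (F ℓ) := by ring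
        nth_rewrite 1 [h0]
        exact norm_sub_le _ _
      rw [habse] at h1
      linarith
    have hzpos : 0 < ‖inn (f ε ℓ) (F ℓ)‖ := by linarith
    have hz : inn (f ε ℓ) (F ℓ) ≠ 0 := by
      intro h0
      rw [h0, norm_zero] at hzpos
      exact lt_irrefl 0 hzpos
    have hεne : (ε : ℂ) ≠ 0 := by
      exact_mod_cast ne_of_gt hε.1
    have hq : (lam ε ℓ - c) / (ε : ℂ) - lamhat ℓ
        = (inn u G - lamhat ℓ * inn u (F ℓ)) / inn (f ε ℓ) (F ℓ) := by
      have h2 := hID ε hε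
      rw [hfF, hfG] at h2
      field_simp
      linear_combination h2 - (ε : ℂ) * lamhat ℓ * hfF + (lam ε ℓ - c) * hfF
    rw [hq, norm_div]
    have hnum : ‖inn u G - lamhat ℓ * inn u (F ℓ)‖ ≤ d * K := by
      calc ‖inn u G - lamhat ℓ * inn u (F ℓ)‖
          ≤ ‖inn u G‖ + ‖lamhat ℓ * inn u (F ℓ)‖ := norm_sub_le _ _
        _ = ‖inn u G‖ + ‖lamhat ℓ‖ * ‖inn u (F ℓ)‖ := by rw [norm_mul]
        _ ≤ d * nrm G + ‖lamhat ℓ‖ * d := by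
            have := mul_le_mul_of_nonneg_left hdF (norm_nonneg (lamhat ℓ))
            linarith
        _ = d * K := by rw [hKdef]; ring
    rw [div_le_iff₀ hzpos]
    have hhalf : (1:ℝ)/2 ≤ ‖inn (f ε ℓ) (F ℓ)‖ := by linarith
    calc ‖inn u G - lamhat ℓ * inn u (F ℓ)‖ ≤ d * K := hnum
      _ = (2 * K * d) * (1/2) := by ring
      _ ≤ (2 * K * d) * ‖inn (f ε ℓ) (F ℓ)‖ :=
          mul_le_mul_of_nonneg_left hhalf (by positivity)
      _ = 2 * K * d * ‖inn (f ε ℓ) (F ℓ)‖ := by ring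
  -- final limit argument
  rw [Metric.tendsto_nhds]
  intro δ hδ
  set η : ℝ := min (1/4) (δ / (2 * (K + 1))) with hηdef
  have hη : 0 < η := lt_min (by norm_num) (div_pos hδ (by positivity))
  have h1 : ∀ᶠ ε in 𝓝[>] (0:ℝ), ε ∈ Set.Ioo (0:ℝ) ε₀ :=
    Ioo_mem_nhdsGT_of_mem ⟨le_refl 0, hε₀⟩
  have h2 : ∀ᶠ ε in 𝓝[>] (0:ℝ), phaseDist (f ε ℓ) (F ℓ) < η :=
    (hconv ℓ).eventually_lt_const hη
  filter_upwards [h1, h2] with ε hε hpd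
  have hset : ((fun θ : ℝ => nrm (f ε ℓ - Complex.exp (θ * Complex.I) • F ℓ)) ''
      Set.Ico 0 (2 * Real.pi)).Nonempty := by
    refine ⟨_, ⟨0, ⟨le_refl 0, by positivity⟩, rfl⟩⟩
  have hpd' : sInf ((fun θ : ℝ => nrm (f ε ℓ - Complex.exp (θ * Complex.I) • F ℓ)) ''
      Set.Ico 0 (2 * Real.pi)) < η := hpd
  obtain ⟨x, hxmem, hxlt⟩ := exists_lt_of_csInf_lt hset hpd'
  obtain ⟨θ, hθmem, rfl⟩ := hxmem
  have hηq : η ≤ 1/4 := min_le_left _ _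
  have hd2 : nrm (f ε ℓ - Complex.exp (θ * Complex.I) • F ℓ) < 1/2 := by linarith
  have hest := hEst ε hε θ hd2
  rw [dist_eq_norm]
  have hd0 : 0 ≤ nrm (f ε ℓ - Complex.exp (θ * Complex.I) • F ℓ) := nrm_nonneg' _
  have hη2 : 2 * (K + 1) * η ≤ δ := by
    rw [hηdef]
    have : η ≤ δ / (2 * (K + 1)) := min_le_right _ _
    calc 2 * (K + 1) * η ≤ 2 * (K + 1) * (δ / (2 * (K + 1))) := by
          apply mul_le_mul_of_nonneg_left (min_le_right _ _) (by positivity)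
      _ = δ := by field_simp
  calc ‖(lam ε ℓ - c) / (ε : ℂ) - lamhat ℓ‖
      ≤ 2 * K * nrm (f ε ℓ - Complex.exp (θ * Complex.I) • F ℓ) := hest
    _ ≤ 2 * K * η := by nlinarith
    _ < 2 * (K + 1) * η := by nlinarith
    _ ≤ δ := hη2
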